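/- For the implicit Euler step of the heat flow: let ν, τ > 0 and let f, w ∈ H²(𝕋) satisfy (w − f)/τ = ν∂ₓₓw + g for some g ∈ L²(𝕋). Then (ν/2)‖∂ₓw‖²_{L²} − (ν/2)‖∂ₓf‖²_{L²} + (1/τ)‖w − f‖²_{L²} ≤ ∫_𝕋 g(w − f) dx. -/

import Mathlib

open MeasureTheory intervalIntegral

/-- Discrete energy estimate for the implicit Euler step of the heat
flow on the `2π`-periodic torus (realized as `2π`-periodic functions on `ℝ`):
if `(w − f)/τ = ν ∂ₓₓ w + g`, then
`(ν/2)‖∂ₓw‖² − (ν/2)‖∂ₓf‖² + (1/τ)‖w − f‖² ≤ ∫ g (w − f)`. -/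
theorem implicit_euler_energy_estimate (ν τ : ℝ) (hν : 0 < ν) (hτ : 0 < τ)
    (f f' w w' w'' g : ℝ → ℝ)
    (hfp : Function.Periodic f (2 * Real.pi))
    (hwp : Function.Periodic w (2 * Real.pi))
    (hf' : ∀ x, HasDerivAt f (f' x) x)
    (hw' : ∀ x, HasDerivAt w (w' x) x)
    (hw'' : ∀ x, HasDerivAt w' (w'' x) x)
    (hcf' : Continuous f') (hcw' : Continuous w') (hcw'' : Continuous w'')
    (hgi : IntervalIntegrable (fun x => g x * (w x - f x)) volume 0 (2 * Real.pi))
    (heq : ∀ x, (w x - f x) / τ = ν * w'' x + g x) :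
    ν / 2 * (∫ x in (0:ℝ)..(2 * Real.pi), (w' x)^2)
      - ν / 2 * (∫ x in (0:ℝ)..(2 * Real.pi), (f' x)^2)
      + (1/τ) * (∫ x in (0:ℝ)..(2 * Real.pi), (w x - f x)^2)
      ≤ ∫ x in (0:ℝ)..(2 * Real.pi), g x * (w x - f x) := by
  have pi_pos : (0:ℝ) < 2 * Real.pi := Real.two_pi_pos
  have hcf : Continuous f := continuous_iff_continuousAt.2 fun x => (hf' x).continuousAt
  have hcw : Continuous w := continuous_iff_continuousAt.2 fun x => (hw' x).continuousAt
  -- periodicity of w'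
  have hw'p : w' (2 * Real.pi) = w' 0 := by
    have h1 : HasDerivAt (fun y => w (y + 2 * Real.pi)) (w' (0 + 2 * Real.pi)) 0 := by
      simpa [Function.comp_def] using (hw' (0 + 2 * Real.pi)).comp 0 ((hasDerivAt_id 0).add_const (2 * Real.pi))
    have h2 : (fun y => w (y + 2 * Real.pi)) = w := funext fun y => hwp y
    rw [h2] at h1
    have := h1.unique (hw' 0)
    simpa using this
  set A := ∫ x in (0:ℝ)..(2 * Real.pi), (w' x)^2 with hA
  set B := ∫ x in (0:ℝ)..(2 * Real.pi), (f' x)^2 with hB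
  set C := ∫ x in (0:ℝ)..(2 * Real.pi), (w x - f x)^2 with hC
  set D := ∫ x in (0:ℝ)..(2 * Real.pi), w'' x * (w x - f x) with hD
  set P := ∫ x in (0:ℝ)..(2 * Real.pi), w' x * f' x with hP
  -- integration by parts
  have hibp : ∫ x in (0:ℝ)..(2 * Real.pi), w' x * (w' x - f' x)
      = w' (2 * Real.pi) * (w (2 * Real.pi) - f (2 * Real.pi)) - w' 0 * (w 0 - f 0) - D := by
    apply intervalIntegral.integral_mul_deriv_eq_deriv_mul
      (u := w') (u' := w'') (v := fun x => w x - f x) (v' := fun x => w' x - f' x)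
    · exact fun x _ => hw'' x
    · exact fun x _ => (hw' x).sub (hf' x)
    · exact hcw''.intervalIntegrable _ _
    · exact (hcw'.sub hcf').intervalIntegrable _ _
  have hwper : w (2 * Real.pi) = w 0 := by simpa using hwp 0
  have hfper : f (2 * Real.pi) = f 0 := by simpa using hfp 0
  have hE : ∫ x in (0:ℝ)..(2 * Real.pi), w' x * (w' x - f' x) = -D := by
    rw [hibp, hw'p, hwper, hfper]; ring
  -- split E = A - P
  have hE2 : ∫ x in (0:ℝ)..(2 * Real.pi), w' x * (w' x - f' x) = A - P := by
    have : ∫ x in (0:ℝ)..(2 * Real.pi), ((w' x)^2 - w' x * f' x) = A - P :=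
      intervalIntegral.integral_sub ((hcw'.pow 2).intervalIntegrable _ _)
        ((hcw'.mul hcf').intervalIntegrable _ _)
    rw [← this]
    congr 1; funext x; ring
  -- ∫ (w'-f')² = A - 2P + B
  have hsq : ∫ x in (0:ℝ)..(2 * Real.pi), (w' x - f' x)^2 = A - 2*P + B := by
    have h1 : ∫ x in (0:ℝ)..(2 * Real.pi), ((w' x)^2 - 2*(w' x * f' x) + (f' x)^2)
        = A - 2*P + B := by
      rw [intervalIntegral.integral_add, intervalIntegral.integral_sub,
        intervalIntegral.integral_const_mul]
      · exact (hcw'.pow 2).intervalIntegrable _ _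
      · exact ((continuous_const.mul (hcw'.mul hcf'))).intervalIntegrable _ _
      · exact (((hcw'.pow 2).sub (continuous_const.mul (hcw'.mul hcf')))).intervalIntegrable _ _
      · exact (hcf'.pow 2).intervalIntegrable _ _
    rw [← h1]; congr 1; funext x; ring
  have hsqnn : (0:ℝ) ≤ A - 2*P + B := by
    rw [← hsq]
    exact intervalIntegral.integral_nonneg pi_pos.le fun x _ => sq_nonneg _
  have hDA : -D = A - P := hE ▸ hE2
  -- rewrite the right side
  have hG : (∫ x in (0:ℝ)..(2 * Real.pi), g x * (w x - f x)) = (1/τ) * C - ν * D := by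
    have hfun : (fun x => g x * (w x - f x))
        = fun x => (1/τ) * (w x - f x)^2 - ν * (w'' x * (w x - f x)) := by
      funext x
      have h := heq x
      have hg : g x = (w x - f x) / τ - ν * w'' x := by linarith
      rw [hg]; field_simp
    rw [hfun, intervalIntegral.integral_sub, intervalIntegral.integral_const_mul,
      intervalIntegral.integral_const_mul]
    · exact (continuous_const.mul (((hcw.sub hcf).pow 2))).intervalIntegrable _ _
    · exact (continuous_const.mul (hcw''.mul (hcw.sub hcf))).intervalIntegrable _ _
  rw [hG]
  nlinarith [mul_le_mul_of_nonneg_left (by linarith : A/2 - B/2 ≤ A - P) hν.le, hDA]
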